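/- Let R be a regular expression and Gl(R) its Glushkov automaton. For any graph database D, a sequence (e_1, α_1)…(e_n, α_n) of (edge, position) pairs is a binding trail of D matching R if and only if the corresponding run in D×Gl(R) — visiting states α_1, …, α_n after the initial state — is a run such that the pairs (e_i, q_{i+1}) of edge and arriving state are pairwise distinct. Consequently, the binding-trail semantics ⟦R⟧_BT(D) equals π_D applied to the runs of D×Gl(R) with pairwise-distinct (edge, arrival-state) pairs. -/

import Mathlib

structure GraphDB (σ V E : Type) where
  src : E → V
  tgt : E → V
  lbl : E → Set σ

inductive GraphDB.IsWalkFrom {σ V E : Type} (D : GraphDB σ V E) : V → List E → V → Prop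
  | nil (v : V) : D.IsWalkFrom v [] v
  | cons {v u t : V} {e : E} {es : List E} :
      D.src e = v → D.tgt e = u → D.IsWalkFrom u es t → D.IsWalkFrom v (e :: es) t

/-- The list of vertices visited by a walk starting at `s` with edge list `es`. -/
def GraphDB.walkVertices {σ V E : Type} (D : GraphDB σ V E) (s : V) (es : List E) : List V :=
  s :: es.map D.tgt

/-- `w` is one of the label words of the walk with edges `es`. -/
def GraphDB.WalkLabel {σ V E : Type} (D : GraphDB σ V E) (es : List E) (w : List σ) : Prop :=
  List.Forall₂ (fun a e => a ∈ D.lbl e) w es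

structure Auto (σ Q : Type) where
  Δ : Set (Q × σ × Q)
  I : Set Q
  F : Set Q

inductive Auto.IsComp {σ Q : Type} (A : Auto σ Q) : Q → List σ → Q → Prop
  | nil (q : Q) : A.IsComp q [] q
  | cons {q q' t : Q} {a : σ} {w : List σ} :
      (q, a, q') ∈ A.Δ → A.IsComp q' w t → A.IsComp q (a :: w) t

def Auto.Accepts {σ Q : Type} (A : Auto σ Q) (w : List σ) : Prop :=
  ∃ i ∈ A.I, ∃ f ∈ A.F, A.IsComp i w f

/-- Edges of the product (run) database `D × A`. -/
def ProdEdge {σ V E Q : Type} (D : GraphDB σ V E) (A : Auto σ Q) : Type :=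
  { p : E × (Q × σ × Q) // p.2 ∈ A.Δ ∧ p.2.2.1 ∈ D.lbl p.1 }

/-- The product (run) database `D × A`. -/
def prodDB {σ V E Q : Type} (D : GraphDB σ V E) (A : Auto σ Q) :
    GraphDB σ (V × Q) (ProdEdge D A) where
  src p := (D.src p.1.1, p.1.2.1)
  tgt p := (D.tgt p.1.1, p.1.2.2.2)
  lbl p := {p.1.2.2.1}

/-- A run: a walk of `D × A` from `V × I` to `V × F`. -/
def IsRun {σ V E Q : Type} (D : GraphDB σ V E) (A : Auto σ Q)
    (p : V × Q) (es : List (ProdEdge D A)) (q : V × Q) : Prop :=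
  (prodDB D A).IsWalkFrom p es q ∧ p.2 ∈ A.I ∧ q.2 ∈ A.F

/-- A walk is simple if it repeats no vertex. -/
def IsSimple {σ V E : Type} (D : GraphDB σ V E) (s : V) (es : List E) : Prop :=
  (D.walkVertices s es).Nodup

/-- Projection of product edges to edges of `D`. -/
def projEdges {σ V E Q : Type} {D : GraphDB σ V E} {A : Auto σ Q}
    (es : List (ProdEdge D A)) : List E := es.map (fun p => p.1.1)

/-- Membership in the simple-run semantics `⟦A⟧_SR(D)`:
the walk `(s, es, t)` is the projection of some simple run of `D × A`. -/
def InSR {σ V E Q : Type} (D : GraphDB σ V E) (A : Auto σ Q)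
    (s : V) (es : List E) (t : V) : Prop :=
  ∃ (i f : Q) (r : List (ProdEdge D A)),
    IsRun D A (s, i) r (t, f) ∧ IsSimple (prodDB D A) (s, i) r ∧ projEdges r = es

open RegularExpression Computability

/-- Number of occurrences of the letter `b` in a regular expression. -/
def charCount {β : Type} [DecidableEq β] (b : β) : RegularExpression β → ℕ
  | RegularExpression.zero => 0
  | RegularExpression.epsilon => 0
  | RegularExpression.char c => if c = b then 1 else 0
  | RegularExpression.plus p q => charCount b p + charCount b q
  | RegularExpression.comp p q => charCount b p + charCount b q
  | RegularExpression.star p => charCount b p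

/-- A linearised expression: each position occurs at most once. -/
def Linear {Γ : Type} [DecidableEq Γ] (R' : RegularExpression Γ) : Prop :=
  ∀ γ : Γ, charCount γ R' ≤ 1

/-- Transitions of the Glushkov automaton of a linearised expression `R'` over the
positions `Γ`, with underlying-letter map `bar : Γ → σ`; states are `Option Γ`,
`none` being the initial state `init`. -/
def GlDelta {σ Γ : Type} (bar : Γ → σ) (R' : RegularExpression Γ) :
    Set (Option Γ × σ × Option Γ) :=
  {t | (∃ (α β : Γ) (u v : List Γ), t = (some α, bar β, some β) ∧
          u ++ α :: β :: v ∈ R'.matches') ∨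
       (∃ (α : Γ) (u : List Γ), t = (none, bar α, some α) ∧ α :: u ∈ R'.matches')}

/-- Final states of the Glushkov automaton. -/
def GlFinal {Γ : Type} (R' : RegularExpression Γ) : Set (Option Γ) :=
  {q | (∃ (α : Γ) (u : List Γ), q = some α ∧ u ++ [α] ∈ R'.matches') ∨
       (q = none ∧ [] ∈ R'.matches')}

/-- The Glushkov automaton as an automaton with state set `Option Γ`. -/
def GlAuto {σ Γ : Type} (bar : Γ → σ) (R' : RegularExpression Γ) :
    Auto σ (Option Γ) :=
  ⟨GlDelta bar R', {none}, GlFinal R'⟩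

/-- A binding trail of `D` matching `R` (given via its linearisation `R'`),
from `s` to `t`. -/
def BindingTrail {σ V E Γ : Type} (D : GraphDB σ V E) (bar : Γ → σ)
    (R' : RegularExpression Γ) (s : V) (l : List (E × Γ)) (t : V) : Prop :=
  D.IsWalkFrom s (l.map Prod.fst) t ∧
  (∀ p ∈ l, bar p.2 ∈ D.lbl p.1) ∧
  (l.map Prod.snd) ∈ R'.matches' ∧
  l.Nodup

namespace Stmt11Aux

variable {Γ : Type}

def Fir (L : Language Γ) (a : Γ) : Prop := ∃ u, a :: u ∈ L
def Las (L : Language Γ) (a : Γ) : Prop := ∃ u, u ++ [a] ∈ L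
def Fol (L : Language Γ) (a b : Γ) : Prop := ∃ u v, u ++ a :: b :: v ∈ L

lemma matches'_epsE : (RegularExpression.epsilon : RegularExpression Γ).matches' = 1 := rfl
lemma matches'_zeroE : (RegularExpression.zero : RegularExpression Γ).matches' = 0 := rfl
lemma matches'_charE (c : Γ) : (RegularExpression.char c).matches' = {[c]} := rfl
lemma matches'_plusE (p q : RegularExpression Γ) :
    (RegularExpression.plus p q).matches' = p.matches' + q.matches' := rfl
lemma matches'_compE (p q : RegularExpression Γ) :
    (RegularExpression.comp p q).matches' = p.matches' * q.matches' := rfl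
lemma matches'_starE (p : RegularExpression Γ) :
    (RegularExpression.star p).matches' = p.matches'∗ := rfl

lemma charCount_pos [DecidableEq Γ] {R : RegularExpression Γ} {w : List Γ} {a : Γ}
    (hw : w ∈ R.matches') (ha : a ∈ w) : 1 ≤ charCount a R := by
  induction R generalizing w with
  | zero => exact absurd hw (Language.notMem_zero w)
  | epsilon =>
    rw [matches'_epsE, Language.mem_one] at hw; subst hw; simp at ha
  | char c =>
    rw [matches'_charE] at hw; replace hw : w = [c] := hw; subst hw
    simp at ha; subst ha; simp [charCount]
  | plus p q ihp ihq =>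
    rw [matches'_plusE, Language.mem_add] at hw
    simp only [charCount]
    rcases hw with h | h
    · have := ihp h ha; omega
    · have := ihq h ha; omega
  | comp p q ihp ihq =>
    rw [matches'_compE, Language.mem_mul] at hw
    obtain ⟨x, hx, y, hy, rfl⟩ := hw
    simp only [charCount]
    rcases List.mem_append.mp ha with h | h
    · have := ihp hx h; omega
    · have := ihq hy h; omega
  | star p ih =>
    rw [matches'_starE, Language.mem_kstar] at hw
    obtain ⟨S, rfl, hS⟩ := hw
    obtain ⟨c, hc, hac⟩ := List.mem_flatten.mp ha
    simpa only [charCount] using ih (hS c hc) hac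

lemma fir_add {L M : Language Γ} {a : Γ} (h : Fir (L + M) a) : Fir L a ∨ Fir M a := by
  obtain ⟨u, hu⟩ := h
  rcases (Language.mem_add L M _).mp hu with h | h
  · exact Or.inl ⟨u, h⟩
  · exact Or.inr ⟨u, h⟩

lemma las_add {L M : Language Γ} {a : Γ} (h : Las (L + M) a) : Las L a ∨ Las M a := by
  obtain ⟨u, hu⟩ := h
  rcases (Language.mem_add L M _).mp hu with h | h
  · exact Or.inl ⟨u, h⟩
  · exact Or.inr ⟨u, h⟩

lemma fol_add {L M : Language Γ} {a b : Γ} (h : Fol (L + M) a b) : Fol L a b ∨ Fol M a b := by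
  obtain ⟨u, v, hu⟩ := h
  rcases (Language.mem_add L M _).mp hu with h | h
  · exact Or.inl ⟨u, v, h⟩
  · exact Or.inr ⟨u, v, h⟩

lemma fir_mul {L M : Language Γ} {a : Γ} (h : Fir (L * M) a) :
    Fir L a ∨ ([] ∈ L ∧ Fir M a) := by
  obtain ⟨u, hu⟩ := h
  obtain ⟨x, hx, y, hy, hxy⟩ := Language.mem_mul.mp hu
  cases x with
  | nil =>
    right
    simp only [List.nil_append] at hxy; subst hxy
    exact ⟨hx, u, hy⟩
  | cons c x' =>
    left
    simp only [List.cons_append, List.cons.injEq] at hxy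
    obtain ⟨rfl, _⟩ := hxy
    exact ⟨x', hx⟩

lemma las_mul {L M : Language Γ} {a : Γ} (h : Las (L * M) a) :
    (Las L a ∧ [] ∈ M) ∨ Las M a := by
  obtain ⟨u, hu⟩ := h
  obtain ⟨x, hx, y, hy, hxy⟩ := Language.mem_mul.mp hu
  rcases y.eq_nil_or_concat with rfl | ⟨y', b, rfl⟩
  · left
    rw [List.append_nil] at hxy; subst hxy
    exact ⟨⟨u, hx⟩, hy⟩
  · right
    rw [List.concat_eq_append, ← List.append_assoc] at hxy
    obtain ⟨-, hb⟩ := List.append_inj' hxy rfl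
    obtain rfl : b = a := by simpa using hb
    exact ⟨y', by rwa [List.concat_eq_append] at hy⟩

lemma fol_mul {L M : Language Γ} {a b : Γ} (h : Fol (L * M) a b) :
    Fol L a b ∨ (Las L a ∧ Fir M b) ∨ Fol M a b := by
  obtain ⟨u, v, hu⟩ := h
  obtain ⟨x, hx, y, hy, hxy⟩ := Language.mem_mul.mp hu
  rcases List.append_eq_append_iff.mp hxy with ⟨m, hm1, hm2⟩ | ⟨m, hm1, hm2⟩
  · -- u = x ++ m, y = m ++ a :: b :: v  (check orientation at compile time)
    right; right
    exact ⟨m, v, by rw [← hm2]; exact hy⟩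
  · -- x = u ++ m, a :: b :: v = m ++ y
    match m, hm2 with
    | [], hm2 =>
      right; right
      have hy' : y = a :: b :: v := by simpa using hm2.symm
      exact ⟨[], v, by rw [List.nil_append, ← hy']; exact hy⟩
    | [g], hm2 =>
      right; left
      simp only [List.cons_append, List.nil_append, List.cons.injEq] at hm2
      obtain ⟨rfl, hm2⟩ := hm2
      subst hm1
      exact ⟨⟨u, hx⟩, ⟨v, by rw [← hm2] at hy; exact hy⟩⟩
    | g :: g' :: m', hm2 =>
      left
      simp only [List.cons_append, List.cons.injEq] at hm2
      obtain ⟨rfl, rfl, _⟩ := hm2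
      subst hm1
      exact ⟨u, m', hx⟩

lemma fir_star {L : Language Γ} {a : Γ} (h : Fir (L∗) a) : Fir L a := by
  obtain ⟨u, hu⟩ := h
  obtain ⟨S, hS1, hS2⟩ := Language.mem_kstar_iff_exists_nonempty.mp hu
  cases S with
  | nil => simp at hS1
  | cons c S' =>
    obtain ⟨hcL, hcne⟩ := hS2 c (by simp)
    cases c with
    | nil => exact absurd rfl hcne
    | cons d c' =>
      simp only [List.flatten_cons, List.cons_append, List.cons.injEq] at hS1
      obtain ⟨rfl, -⟩ := hS1
      exact ⟨c', hcL⟩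

lemma las_star {L : Language Γ} {a : Γ} (h : Las (L∗) a) : Las L a := by
  obtain ⟨u, hu⟩ := h
  obtain ⟨S, hS1, hS2⟩ := Language.mem_kstar_iff_exists_nonempty.mp hu
  clear hu
  induction S generalizing u with
  | nil => simp at hS1
  | cons c S' ih =>
    by_cases hS' : S'.flatten = []
    · rw [List.flatten_cons, hS', List.append_nil] at hS1
      exact ⟨u, by rw [hS1]; exact (hS2 c (by simp)).1⟩
    · rcases (S'.flatten).eq_nil_or_concat with h' | ⟨j', b, hj⟩
      · exact absurd h' hS'
      · rw [List.concat_eq_append] at hj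
        rw [List.flatten_cons, hj, ← List.append_assoc] at hS1
        obtain ⟨-, hb⟩ := List.append_inj' hS1.symm rfl
        obtain rfl : b = a := by simpa using hb
        exact ih j' (by rw [hj]) (fun y hy => hS2 y (by simp [hy]))

lemma fol_star {L : Language Γ} {a b : Γ} (h : Fol (L∗) a b) :
    Fol L a b ∨ (Las L a ∧ Fir L b) := by
  obtain ⟨u, v, hu⟩ := h
  obtain ⟨S, hS1, hS2⟩ := Language.mem_kstar_iff_exists_nonempty.mp hu
  clear hu
  induction S generalizing u with
  | nil => simp at hS1
  | cons c S' ih =>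
    rw [List.flatten_cons] at hS1
    rcases List.append_eq_append_iff.mp hS1.symm with ⟨m, hm1, hm2⟩ | ⟨m, hm1, hm2⟩
    · exact ih m hm2.symm (fun y hy => hS2 y (by simp [hy]))
    · match m, hm2 with
      | [], hm2 =>
        exact ih [] (by rw [List.nil_append] at hm2; rw [List.nil_append]; exact hm2)
          (fun y hy => hS2 y (by simp [hy]))
      | [g], hm2 =>
        right
        simp only [List.cons_append, List.nil_append, List.cons.injEq] at hm2
        obtain ⟨rfl, hm2⟩ := hm2
        subst hm1
        refine ⟨⟨u, (hS2 (u ++ [a]) (by simp)).1⟩, ?_⟩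
        have hmem : S'.flatten ∈ L∗ :=
          Language.join_mem_kstar (fun y hy => (hS2 y (by simp [hy])).1)
        rw [← hm2] at hmem
        exact fir_star ⟨v, hmem⟩
      | g :: g' :: m', hm2 =>
        left
        simp only [List.cons_append, List.cons.injEq] at hm2
        obtain ⟨rfl, rfl, -⟩ := hm2
        subst hm1
        exact ⟨u, m', (hS2 _ (by simp)).1⟩


lemma split_chain {Γ : Type} {Rel Fp : Γ → Γ → Prop} {LasP FirQ P Q : Γ → Prop}
    (hsplit : ∀ α β, P α → Rel α β → (Fp α β ∧ P β) ∨ (LasP α ∧ FirQ β ∧ Q β)) :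
    ∀ (w : List Γ) (a : Γ), P a → List.Chain' Rel (a :: w) →
      (List.Chain' Fp (a :: w) ∧ P ((a :: w).getLast (List.cons_ne_nil a w))) ∨
      ∃ w1 b w2, a :: w = w1 ++ b :: w2 ∧ w1 ≠ [] ∧ List.Chain' Fp w1 ∧
        (∀ h : w1 ≠ [], LasP (w1.getLast h)) ∧ FirQ b ∧ Q b ∧ List.Chain' Rel (b :: w2) := by
  intro w
  induction w with
  | nil => intro a ha _; left; exact ⟨List.isChain_singleton a, by simpa using ha⟩
  | cons b w' ih =>
    intro a ha hch
    obtain ⟨hab, hch'⟩ := List.isChain_cons_cons.mp hch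
    rcases hsplit a b ha hab with ⟨hfab, hb⟩ | ⟨hla, hfb, hqb⟩
    · rcases ih b hb hch' with ⟨hchp, hP⟩ | ⟨w1, c, w2, heq, hne, hch1, hlas, hfir, hq, hch2⟩
      · left
        refine ⟨List.isChain_cons_cons.mpr ⟨hfab, hchp⟩, ?_⟩
        rwa [List.getLast_cons (List.cons_ne_nil b w')]
      · right
        obtain ⟨b', w1', rfl⟩ : ∃ b' w1', w1 = b' :: w1' := by
          cases w1 with
          | nil => exact absurd rfl hne
          | cons x y => exact ⟨x, y, rfl⟩
        rw [List.cons_append, List.cons.injEq] at heq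
        obtain ⟨rfl, hw'⟩ := heq
        refine ⟨a :: b :: w1', c, w2, by simp [hw'], List.cons_ne_nil _ _,
          List.isChain_cons_cons.mpr ⟨hfab, hch1⟩, ?_, hfir, hq, hch2⟩
        intro _
        rw [List.getLast_cons (List.cons_ne_nil b w1')]
        exact hlas _
    · right
      exact ⟨[a], b, w', rfl, List.cons_ne_nil a [], List.isChain_singleton a,
        fun _ => by simpa using hla, hfb, hqb, hch'⟩

lemma side_chain {Γ : Type} {Rel Fp : Γ → Γ → Prop} {P : Γ → Prop}
    (hsplit : ∀ α β, P α → Rel α β → Fp α β ∧ P β) :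
    ∀ (w : List Γ) (a : Γ), P a → List.Chain' Rel (a :: w) →
      List.Chain' Fp (a :: w) ∧ P ((a :: w).getLast (List.cons_ne_nil a w)) := by
  intro w a ha hch
  rcases split_chain (LasP := fun _ => False) (FirQ := fun _ => False) (Q := fun _ => False)
      (fun α β hα hr => Or.inl (hsplit α β hα hr)) w a ha hch with
    h | ⟨_, _, _, _, _, _, _, hf, _, _⟩
  · exact h
  · exact hf.elim

lemma getLast_append_cons {Γ : Type} (w1 : List Γ) (b : Γ) (w2 : List Γ) :
    (w1 ++ b :: w2).getLast (by simp) = (b :: w2).getLast (List.cons_ne_nil b w2) :=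
  List.getLast_append_of_ne_nil _ (List.cons_ne_nil b w2)

def Brk {Γ : Type} (l : Language Γ) (a b : Γ) : Prop := Fol l a b ∨ (Las l a ∧ Fir l b)

theorem star_assemble {Γ : Type} (l : Language Γ)
    (Hmem : ∀ (a : Γ) (w : List Γ), Fir l a → List.Chain' (Fol l) (a :: w) →
      Las l ((a :: w).getLast (List.cons_ne_nil a w)) → (a :: w) ∈ l)
    (a : Γ) (w : List Γ) (hf : Fir l a) (hch : List.Chain' (Brk l) (a :: w))
    (hl : Las l ((a :: w).getLast (List.cons_ne_nil a w))) : (a :: w) ∈ l∗ := by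
  rcases split_chain (Rel := Brk l) (Fp := Fol l) (LasP := Las l) (FirQ := Fir l)
      (P := fun _ => True) (Q := fun _ => True)
      (fun α β _ hr => hr.elim (fun h => Or.inl ⟨h, trivial⟩)
        (fun h => Or.inr ⟨h.1, h.2, trivial⟩)) w a trivial hch with
    ⟨hchp, -⟩ | ⟨w1, b, w2, heq, hne, hch1, hlas, hfir, -, hch2⟩
  · refine Language.mem_kstar.mpr ⟨[a :: w], by simp, ?_⟩
    intro y hy
    rw [List.mem_singleton] at hy; subst hy
    exact Hmem a w hf hchp hl
  · obtain ⟨a', w1', rfl⟩ : ∃ a' w1', w1 = a' :: w1' := by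
      cases w1 with
      | nil => exact absurd rfl hne
      | cons x y => exact ⟨x, y, rfl⟩
    rw [List.cons_append, List.cons.injEq] at heq
    obtain ⟨rfl, hw⟩ := heq
    have h1 : (a :: w1') ∈ l := Hmem a w1' hf hch1 (hlas (List.cons_ne_nil a w1'))
    have hl2 : Las l ((b :: w2).getLast (List.cons_ne_nil b w2)) := by
      rw [← getLast_append_cons (a :: w1') b w2]
      subst hw
      exact hl
    have h2 : (b :: w2) ∈ l∗ := star_assemble l Hmem b w2 hfir hch2 hl2
    obtain ⟨S, hS1, hS2⟩ := Language.mem_kstar.mp h2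
    refine Language.mem_kstar.mpr ⟨(a :: w1') :: S, ?_, ?_⟩
    · rw [List.flatten_cons, ← hS1, hw, List.cons_append]
    · intro y hy
      rcases List.mem_cons.mp hy with rfl | hy
      · exact h1
      · exact hS2 y hy
termination_by w.length
decreasing_by
  subst hw; simp; omega

theorem glushkov {Γ : Type} [DecidableEq Γ] (R : RegularExpression Γ) :
    Linear R → ∀ (a : Γ) (w : List Γ), Fir R.matches' a →
      List.Chain' (Fol R.matches') (a :: w) →
      Las R.matches' ((a :: w).getLast (List.cons_ne_nil a w)) → (a :: w) ∈ R.matches' := by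
  induction R with
  | zero =>
    intro _ a w hf _ _
    obtain ⟨u, hu⟩ := hf
    exact absurd hu (Language.notMem_zero _)
  | epsilon =>
    intro _ a w hf _ _
    obtain ⟨u, hu⟩ := hf
    rw [matches'_epsE, Language.mem_one] at hu
    simp at hu
  | char c =>
    intro _ a w hf hch _
    obtain ⟨u, hu⟩ := hf
    rw [matches'_charE] at hu; replace hu : a :: u = [c] := hu
    obtain ⟨rfl, rfl⟩ : a = c ∧ u = [] := by simpa using hu
    cases w with
    | nil => rw [matches'_charE]; exact rfl
    | cons b w' =>
      obtain ⟨u', v', huv⟩ := (List.isChain_cons_cons.mp hch).1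
      rw [matches'_charE] at huv; replace huv : _ = [a] := huv
      have := congrArg List.length huv
      simp at this
      omega
  | plus p q ihp ihq =>
    intro hlin a w hf hch hl
    have hlp : Linear p := fun γ => by have := hlin γ; simp only [charCount] at this; omega
    have hlq : Linear q := fun γ => by have := hlin γ; simp only [charCount] at this; omega
    have hex : ∀ γ, 1 ≤ charCount γ p → 1 ≤ charCount γ q → False := fun γ h1 h2 => by
      have := hlin γ; simp only [charCount] at this; omega
    rw [matches'_plusE] at hf hch hl ⊢
    rw [Language.mem_add]
    rcases fir_add hf with hfp | hfq
    · left
      have hPa : 1 ≤ charCount a p := by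
        obtain ⟨u, hu⟩ := hfp; exact charCount_pos hu (by simp)
      obtain ⟨hchp, hPl⟩ := side_chain (Fp := Fol p.matches')
        (P := fun γ => 1 ≤ charCount γ p) (fun α β hα hfol => by
          rcases fol_add hfol with h | h
          · obtain ⟨u, v, hm⟩ := h
            exact ⟨⟨u, v, hm⟩, charCount_pos hm (by simp)⟩
          · obtain ⟨u, v, hm⟩ := h
            exact absurd (charCount_pos hm (by simp)) (fun h' => hex α hα h')) w a hPa hch
      have hlp' : Las p.matches' ((a :: w).getLast (List.cons_ne_nil a w)) := by
        rcases las_add hl with h | h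
        · exact h
        · obtain ⟨u, hm⟩ := h
          exact absurd (charCount_pos hm (by simp)) (fun h' => hex _ hPl h')
      exact ihp hlp a w hfp hchp hlp'
    · right
      have hQa : 1 ≤ charCount a q := by
        obtain ⟨u, hu⟩ := hfq; exact charCount_pos hu (by simp)
      obtain ⟨hchq, hQl⟩ := side_chain (Fp := Fol q.matches')
        (P := fun γ => 1 ≤ charCount γ q) (fun α β hα hfol => by
          rcases fol_add hfol with h | h
          · obtain ⟨u, v, hm⟩ := h
            exact absurd (charCount_pos hm (by simp)) (fun h' => hex α h' hα)
          · obtain ⟨u, v, hm⟩ := h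
            exact ⟨⟨u, v, hm⟩, charCount_pos hm (by simp)⟩) w a hQa hch
      have hlq' : Las q.matches' ((a :: w).getLast (List.cons_ne_nil a w)) := by
        rcases las_add hl with h | h
        · obtain ⟨u, hm⟩ := h
          exact absurd (charCount_pos hm (by simp)) (fun h' => hex _ h' hQl)
        · exact h
      exact ihq hlq a w hfq hchq hlq'
  | comp p q ihp ihq =>
    intro hlin a w hf hch hl
    have hlp : Linear p := fun γ => by have := hlin γ; simp only [charCount] at this; omega
    have hlq : Linear q := fun γ => by have := hlin γ; simp only [charCount] at this; omega
    have hex : ∀ γ, 1 ≤ charCount γ p → 1 ≤ charCount γ q → False := fun γ h1 h2 => by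
      have := hlin γ; simp only [charCount] at this; omega
    rw [matches'_compE] at hf hch hl ⊢
    have hFirP : ∀ {γ}, Fir p.matches' γ → 1 ≤ charCount γ p := by
      rintro γ ⟨u, hu⟩; exact charCount_pos hu (by simp)
    have hFirQ : ∀ {γ}, Fir q.matches' γ → 1 ≤ charCount γ q := by
      rintro γ ⟨u, hu⟩; exact charCount_pos hu (by simp)
    have hLasP : ∀ {γ}, Las p.matches' γ → 1 ≤ charCount γ p := by
      rintro γ ⟨u, hu⟩; exact charCount_pos hu (by simp)
    have hLasQ : ∀ {γ}, Las q.matches' γ → 1 ≤ charCount γ q := by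
      rintro γ ⟨u, hu⟩; exact charCount_pos hu (by simp)
    have hFolP : ∀ {γ δ}, Fol p.matches' γ δ → 1 ≤ charCount γ p ∧ 1 ≤ charCount δ p := by
      rintro γ δ ⟨u, v, hu⟩
      exact ⟨charCount_pos hu (by simp), charCount_pos hu (by simp)⟩
    have hFolQ : ∀ {γ δ}, Fol q.matches' γ δ → 1 ≤ charCount γ q ∧ 1 ≤ charCount δ q := by
      rintro γ δ ⟨u, v, hu⟩
      exact ⟨charCount_pos hu (by simp), charCount_pos hu (by simp)⟩
    have hsplitQ : ∀ α β, 1 ≤ charCount α q → Fol (p.matches' * q.matches') α β →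
        Fol q.matches' α β ∧ 1 ≤ charCount β q := by
      intro α β hα hfol
      rcases fol_mul hfol with h | ⟨h1, h2⟩ | h
      · exact absurd (hFolP h).1 (fun h' => hex α h' hα)
      · exact absurd (hLasP h1) (fun h' => hex α h' hα)
      · exact ⟨h, (hFolQ h).2⟩
    have hsplitP : ∀ α β, 1 ≤ charCount α p → Fol (p.matches' * q.matches') α β →
        (Fol p.matches' α β ∧ 1 ≤ charCount α p ∧ 1 ≤ charCount β p) ∨
        (Las p.matches' α ∧ Fir q.matches' β ∧ 1 ≤ charCount β q) := by
      intro α β hα hfol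
      rcases fol_mul hfol with h | ⟨h1, h2⟩ | h
      · exact Or.inl ⟨h, hα, (hFolP h).2⟩
      · exact Or.inr ⟨h1, h2, hFirQ h2⟩
      · exact absurd (hFolQ h).1 (fun h' => hex α hα h')
    rcases fir_mul hf with hfp | ⟨hnp, hfq⟩
    · have hPa : 1 ≤ charCount a p := hFirP hfp
      rcases split_chain (Fp := Fol p.matches') (LasP := Las p.matches')
          (FirQ := Fir q.matches') (P := fun γ => 1 ≤ charCount γ p)
          (Q := fun γ => 1 ≤ charCount γ q)
          (fun α β hα hfol => by
            rcases hsplitP α β hα hfol with ⟨h1, _, h3⟩ | h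
            · exact Or.inl ⟨h1, h3⟩
            · exact Or.inr h) w a hPa hch with
        ⟨hchp, hPl⟩ | ⟨w1, b, w2, heq, hne, hch1, hlas, hfir, hQb, hch2⟩
      · have hlp' : Las p.matches' ((a :: w).getLast (List.cons_ne_nil a w)) ∧
            [] ∈ q.matches' := by
          rcases las_mul hl with h | h
          · exact h
          · exact absurd (hLasQ h) (fun h' => hex _ hPl h')
        have hm := ihp hlp a w hfp hchp hlp'.1
        have := Language.append_mem_mul hm hlp'.2
        simpa using this
      · obtain ⟨a', w1', rfl⟩ : ∃ a' w1', w1 = a' :: w1' := by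
          cases w1 with
          | nil => exact absurd rfl hne
          | cons x y => exact ⟨x, y, rfl⟩
        rw [List.cons_append, List.cons.injEq] at heq
        obtain ⟨rfl, hw⟩ := heq
        have h1 : (a :: w1') ∈ p.matches' :=
          ihp hlp a w1' hfp hch1 (hlas (List.cons_ne_nil a w1'))
        obtain ⟨hchq, hQl⟩ := side_chain (Fp := Fol q.matches')
          (P := fun γ => 1 ≤ charCount γ q) hsplitQ w2 b hQb hch2
        have hl2 : Las (p.matches' * q.matches') ((b :: w2).getLast (List.cons_ne_nil b w2)) := by
          rw [← getLast_append_cons (a :: w1') b w2]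
          subst hw
          exact hl
        have hlq' : Las q.matches' ((b :: w2).getLast (List.cons_ne_nil b w2)) := by
          rcases las_mul hl2 with h | h
          · exact absurd (hLasP h.1) (fun h' => hex _ h' hQl)
          · exact h
        have h2 : (b :: w2) ∈ q.matches' := ihq hlq b w2 hfir hchq hlq'
        have := Language.append_mem_mul h1 h2
        rw [hw]
        simpa using this
    · have hQa : 1 ≤ charCount a q := hFirQ hfq
      obtain ⟨hchq, hQl⟩ := side_chain (Fp := Fol q.matches')
        (P := fun γ => 1 ≤ charCount γ q) hsplitQ w a hQa hch
      have hlq' : Las q.matches' ((a :: w).getLast (List.cons_ne_nil a w)) := by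
        rcases las_mul hl with h | h
        · exact absurd (hLasP h.1) (fun h' => hex _ h' hQl)
        · exact h
      have h2 : (a :: w) ∈ q.matches' := ihq hlq a w hfq hchq hlq'
      have := Language.append_mem_mul hnp h2
      simpa using this
  | star p ih =>
    intro hlin a w hf hch hl
    have hlp : Linear p := fun γ => by
      have := hlin γ; simpa only [charCount] using this
    rw [matches'_starE] at hf hch hl ⊢
    exact star_assemble p.matches' (ih hlp) a w (fir_star hf)
      (hch.imp (fun a b h => fol_star h)) (las_star hl)

lemma walk_nil_iff {σ V E : Type} (D : GraphDB σ V E) (s t : V) :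
    D.IsWalkFrom s [] t ↔ s = t := by
  constructor
  · intro h; cases h; rfl
  · rintro rfl; exact GraphDB.IsWalkFrom.nil s

lemma walk_cons_iff {σ V E : Type} (D : GraphDB σ V E) (s t : V) (e : E) (es : List E) :
    D.IsWalkFrom s (e :: es) t ↔ D.src e = s ∧ D.IsWalkFrom (D.tgt e) es t := by
  constructor
  · intro h
    cases h with
    | cons h1 h2 h3 => exact ⟨h1, by rw [h2]; exact h3⟩
  · rintro ⟨h1, h2⟩
    exact GraphDB.IsWalkFrom.cons h1 rfl h2

lemma proj_walk {σ V E Q : Type} (D : GraphDB σ V E) (A : Auto σ Q) :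
    ∀ (r : List (ProdEdge D A)) (p q : V × Q),
      (prodDB D A).IsWalkFrom p r q → D.IsWalkFrom p.1 (projEdges r) q.1 := by
  intro r
  induction r with
  | nil =>
    intro p q h
    rw [walk_nil_iff] at h; subst h
    exact GraphDB.IsWalkFrom.nil _
  | cons ed r ih =>
    intro p q h
    rw [walk_cons_iff] at h
    obtain ⟨h1, h2⟩ := h
    exact GraphDB.IsWalkFrom.cons (congrArg Prod.fst h1) rfl (ih _ _ h2)

lemma fwd {σ V E Γ : Type} (D : GraphDB σ V E) (bar : Γ → σ) (R' : RegularExpression Γ)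
    (t : V) :
    ∀ (l : List (E × Γ)) (s : V) (u : List Γ) (q : Option Γ),
      D.IsWalkFrom s (l.map Prod.fst) t →
      (∀ p ∈ l, bar p.2 ∈ D.lbl p.1) →
      (u ++ l.map Prod.snd) ∈ R'.matches' →
      (q = none → u = []) → (∀ α, q = some α → ∃ u', u = u' ++ [α]) →
      ∃ (f : Option Γ) (r : List (ProdEdge D (GlAuto bar R'))),
        (prodDB D (GlAuto bar R')).IsWalkFrom (s, q) r (t, f) ∧ f ∈ GlFinal R' ∧
        r.map (fun p => (p.1.1, p.1.2.2.2)) = l.map (fun p => (p.1, some p.2)) := by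
  intro l
  induction l with
  | nil =>
    intro s u q hw hl hm h0 h1
    rw [List.map_nil, walk_nil_iff] at hw; subst hw
    refine ⟨q, [], GraphDB.IsWalkFrom.nil _, ?_, rfl⟩
    cases q with
    | none =>
      right
      refine ⟨rfl, ?_⟩
      have := h0 rfl; subst this
      simpa using hm
    | some α =>
      left
      obtain ⟨u', rfl⟩ := h1 α rfl
      exact ⟨α, u', rfl, by simpa using hm⟩
  | cons p l ih =>
    obtain ⟨e, β⟩ := p
    intro s u q hw hl hm h0 h1
    rw [List.map_cons, walk_cons_iff] at hw
    obtain ⟨hsrc, hw'⟩ := hw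
    have htr : (q, bar β, some β) ∈ GlDelta bar R' := by
      cases q with
      | none =>
        right
        have := h0 rfl; subst this
        exact ⟨β, l.map Prod.snd, rfl, by simpa using hm⟩
      | some α =>
        left
        obtain ⟨u', rfl⟩ := h1 α rfl
        refine ⟨α, β, u', l.map Prod.snd, rfl, ?_⟩
        simpa using hm
    have hlbl : bar β ∈ D.lbl e := hl (e, β) (by simp)
    let ed : ProdEdge D (GlAuto bar R') := ⟨(e, (q, bar β, some β)), htr, hlbl⟩
    obtain ⟨f, r, hr, hf, hmap⟩ := ih (D.tgt e) (u ++ [β]) (some β) hw'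
      (fun p hp => hl p (by simp [hp]))
      (by rw [List.append_assoc]; simpa using hm)
      (fun h => by cases h) (fun α h => by cases h; exact ⟨u, rfl⟩)
    refine ⟨f, ed :: r, ?_, hf, by rw [List.map_cons, hmap]; rfl⟩
    rw [walk_cons_iff]
    refine ⟨?_, ?_⟩
    · show (D.src e, q) = (s, q)
      rw [hsrc]
    · exact hr

lemma bwd_extract {σ V E Γ : Type} (D : GraphDB σ V E) (bar : Γ → σ)
    (R' : RegularExpression Γ) (t : V) (f : Option Γ) :
    ∀ (w : List Γ) (a : Γ) (r : List (ProdEdge D (GlAuto bar R'))) (s : V) (q : Option Γ),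
      (prodDB D (GlAuto bar R')).IsWalkFrom (s, q) r (t, f) →
      r.map (fun pe => pe.1.2.2.2) = (a :: w).map some →
      ((q = none ∧ Fir R'.matches' a) ∨ (∃ α, q = some α ∧ Fol R'.matches' α a)) ∧
      List.Chain' (Fol R'.matches') (a :: w) ∧
      f = some ((a :: w).getLast (List.cons_ne_nil a w)) := by
  intro w
  induction w with
  | nil =>
    intro a r s q hw hmap
    cases r with
    | nil => simp at hmap
    | cons ed r' =>
      rw [List.map_cons, List.map_cons, List.map_nil] at hmap
      injection hmap with h1 h2
      obtain rfl : r' = [] := List.map_eq_nil_iff.mp h2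
      rw [walk_cons_iff] at hw
      obtain ⟨hsrc, hw'⟩ := hw
      rw [walk_nil_iff] at hw'
      have hq : ed.1.2.1 = q := congrArg Prod.snd hsrc
      have hfa : f = some a := by
        have := congrArg Prod.snd hw'
        simp only [prodDB] at this
        rw [← this, h1]
      obtain ⟨htr, -⟩ := ed.2
      refine ⟨?_, List.isChain_singleton a, by simpa using hfa⟩
      rcases htr with ⟨α, β, u, v, hteq, hmem⟩ | ⟨β, u, hteq, hmem⟩
      · right
        have e1 : ed.1.2.1 = some α := by rw [hteq]
        have e3 : ed.1.2.2.2 = some β := by rw [hteq]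
        obtain rfl : β = a := by rw [h1] at e3; injection e3 with e3; exact e3.symm
        exact ⟨α, by rw [← hq, e1], u, v, hmem⟩
      · left
        have e1 : ed.1.2.1 = none := by rw [hteq]
        have e3 : ed.1.2.2.2 = some β := by rw [hteq]
        obtain rfl : β = a := by rw [h1] at e3; injection e3 with e3; exact e3.symm
        exact ⟨by rw [← hq, e1], u, hmem⟩
  | cons b w' ih =>
    intro a r s q hw hmap
    cases r with
    | nil => simp at hmap
    | cons ed r' =>
      rw [List.map_cons, List.map_cons] at hmap
      injection hmap with h1 hmap'
      rw [walk_cons_iff] at hw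
      obtain ⟨hsrc, hw'⟩ := hw
      have hq : ed.1.2.1 = q := congrArg Prod.snd hsrc
      have htg : (prodDB D (GlAuto bar R')).tgt ed = (D.tgt ed.1.1, some a) := by
        show (D.tgt ed.1.1, ed.1.2.2.2) = _
        rw [h1]
      rw [htg] at hw'
      obtain ⟨hfirst, hch, hfeq⟩ := ih b r' (D.tgt ed.1.1) (some a) hw' hmap'
      have hfab : Fol R'.matches' a b := by
        rcases hfirst with ⟨h, -⟩ | ⟨α, hα, hf⟩
        · cases h
        · obtain rfl : α = a := by injection hα with hα; exact hα.symm
          exact hf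
      refine ⟨?_, List.isChain_cons_cons.mpr ⟨hfab, hch⟩, ?_⟩
      · obtain ⟨htr, -⟩ := ed.2
        rcases htr with ⟨α, β, u, v, hteq, hmem⟩ | ⟨β, u, hteq, hmem⟩
        · right
          have e1 : ed.1.2.1 = some α := by rw [hteq]
          have e3 : ed.1.2.2.2 = some β := by rw [hteq]
          obtain rfl : β = a := by rw [h1] at e3; injection e3 with e3; exact e3.symm
          exact ⟨α, by rw [← hq, e1], u, v, hmem⟩
        · left
          have e1 : ed.1.2.1 = none := by rw [hteq]
          have e3 : ed.1.2.2.2 = some β := by rw [hteq]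
          obtain rfl : β = a := by rw [h1] at e3; injection e3 with e3; exact e3.symm
          exact ⟨by rw [← hq, e1], u, hmem⟩
      · rw [List.getLast_cons (List.cons_ne_nil b w')]
        exact hfeq

lemma pairmap_inj {E Γ : Type} :
    Function.Injective (fun p : E × Γ => (p.1, some p.2)) := by
  rintro ⟨e1, g1⟩ ⟨e2, g2⟩ h
  simp only [Prod.mk.injEq, Option.some.injEq] at h
  exact Prod.ext h.1 h.2

end Stmt11Aux

open Stmt11Aux in
theorem stmt_11' {σ V E Γ : Type} [DecidableEq Γ] (D : GraphDB σ V E)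
    (bar : Γ → σ) (R' : RegularExpression Γ) (hlin : Linear R')
    (s t : V) (l : List (E × Γ)) :
    BindingTrail D bar R' s l t ↔
    ∃ (f : Option Γ) (r : List (ProdEdge D (GlAuto bar R'))),
      IsRun D (GlAuto bar R') (s, none) r (t, f) ∧
      r.map (fun p => (p.1.1, p.1.2.2.2)) = l.map (fun p => (p.1, some p.2)) ∧
      (r.map (fun p => (p.1.1, p.1.2.2.2))).Nodup := by
  constructor
  · rintro ⟨hwalk, hlbl, hmem, hnd⟩
    obtain ⟨f, r, hr, hf, hmap⟩ := fwd D bar R' t l s [] none hwalk hlbl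
      (by simpa using hmem) (fun _ => rfl) (fun α h => by cases h)
    refine ⟨f, r, ⟨hr, rfl, hf⟩, hmap, ?_⟩
    rw [hmap]
    exact hnd.map pairmap_inj
  · rintro ⟨f, r, ⟨hwalk, hI, hF⟩, hmap, hnd⟩
    have hF' : f ∈ GlFinal R' := hF
    refine ⟨?_, ?_, ?_, ?_⟩
    · have hpw := proj_walk D (GlAuto bar R') r (s, none) (t, f) hwalk
      have hpe : projEdges r = l.map Prod.fst := by
        have h2 : (r.map (fun p => (p.1.1, p.1.2.2.2))).map Prod.fst
            = (l.map (fun p => (p.1, some p.2))).map Prod.fst := by rw [hmap]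
        simpa [projEdges, List.map_map, Function.comp_def] using h2
      rwa [hpe] at hpw
    · intro p hp
      have hmem' : (p.1, some p.2) ∈ r.map (fun pe => (pe.1.1, pe.1.2.2.2)) := by
        rw [hmap]
        exact List.mem_map_of_mem hp
      obtain ⟨pe, hpe, heq⟩ := List.mem_map.mp hmem'
      have h1 : pe.1.1 = p.1 := congrArg Prod.fst heq
      have h2 : pe.1.2.2.2 = some p.2 := congrArg Prod.snd heq
      obtain ⟨htr, hlb⟩ := pe.2
      rcases htr with ⟨α, β, u, v, hteq, -⟩ | ⟨β, u, hteq, -⟩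
      · have e2 : pe.1.2.2.1 = bar β := by rw [hteq]
        have e3 : pe.1.2.2.2 = some β := by rw [hteq]
        obtain rfl : β = p.2 := by rw [h2] at e3; injection e3 with e3; exact e3.symm
        rw [e2, h1] at hlb
        exact hlb
      · have e2 : pe.1.2.2.1 = bar β := by rw [hteq]
        have e3 : pe.1.2.2.2 = some β := by rw [hteq]
        obtain rfl : β = p.2 := by rw [h2] at e3; injection e3 with e3; exact e3.symm
        rw [e2, h1] at hlb
        exact hlb
    · cases l with
      | nil =>
        obtain rfl : r = [] := by
          have := congrArg List.length hmap
          simpa using List.length_eq_zero_iff.mp (by simpa using this)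
        rw [walk_nil_iff] at hwalk
        have hf : f = none := (congrArg Prod.snd hwalk).symm
        subst hf
        rcases hF' with ⟨α, u, h, -⟩ | ⟨-, hm⟩
        · cases h
        · simpa using hm
      | cons p0 l' =>
        have harr : r.map (fun pe => pe.1.2.2.2)
            = (p0.2 :: l'.map Prod.snd).map some := by
          have h2 := congrArg (List.map Prod.snd) hmap
          simpa [List.map_map, Function.comp_def] using h2
        obtain ⟨hq0, hch, hfeq⟩ :=
          bwd_extract D bar R' t f (l'.map Prod.snd) p0.2 r s none hwalk harr
        have hfir : Fir R'.matches' p0.2 := by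
          rcases hq0 with ⟨-, h⟩ | ⟨α, hα, -⟩
          · exact h
          · cases hα
        have hlas : Las R'.matches'
            ((p0.2 :: l'.map Prod.snd).getLast (List.cons_ne_nil _ _)) := by
          rcases hF' with ⟨α, u, hfa, hm⟩ | ⟨hfn, -⟩
          · rw [hfa] at hfeq
            injection hfeq with hfeq
            rw [hfeq] at hm
            exact ⟨u, hm⟩
          · rw [hfn] at hfeq; cases hfeq
        simpa using glushkov R' hlin p0.2 (l'.map Prod.snd) hfir hch hlas
    · exact List.Nodup.of_map _ (hmap ▸ hnd)


/-- binding trails matching `R` correspond exactly to the runs of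
`D × Gl(R)` whose (edge, arriving-state) pairs are pairwise distinct; hence
`⟦R⟧_BT(D)` is the projection of those runs. -/
theorem stmt_11 {σ V E Γ : Type} [DecidableEq Γ] (D : GraphDB σ V E)
    (bar : Γ → σ) (R' : RegularExpression Γ) (hlin : Linear R')
    (s t : V) (l : List (E × Γ)) :
    BindingTrail D bar R' s l t ↔
    ∃ (f : Option Γ) (r : List (ProdEdge D (GlAuto bar R'))),
      IsRun D (GlAuto bar R') (s, none) r (t, f) ∧
      r.map (fun p => (p.1.1, p.1.2.2.2)) = l.map (fun p => (p.1, some p.2)) ∧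
      (r.map (fun p => (p.1.1, p.1.2.2.2))).Nodup :=
  stmt_11' D bar R' hlin s t l
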